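/- For ρ, σ in DORPₙ: ρ L* σ if and only if im ρ = im σ, and ρ R* σ if and only if ker ρ = ker σ (same domain and same partition of the domain by fibers). -/

import Mathlib

/-- A partial transformation of the chain `[n]` (elements of `Fin n`). -/
def PT (n : ℕ) := Fin n → Option (Fin n)

/-- Right-to-left composition: `x (ρσ) = (x ρ) σ`. -/
def comp {n : ℕ} (ρ σ : PT n) : PT n := fun x => (ρ x).bind σ

/-- The identity partial transformation. -/
def idPT (n : ℕ) : PT n := fun x => some x

/-- Isotone (order-preserving) on its domain. -/
def IsIsotone {n : ℕ} (ρ : PT n) : Prop :=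
  ∀ x x' y y' : Fin n, ρ x = some y → ρ x' = some y' → x ≤ x' → y ≤ y'

/-- Antitone (order-reversing) on its domain. -/
def IsAntitone {n : ℕ} (ρ : PT n) : Prop :=
  ∀ x x' y y' : Fin n, ρ x = some y → ρ x' = some y' → x ≤ x' → y' ≤ y

/-- Order-decreasing on its domain. -/
def IsDecreasing {n : ℕ} (ρ : PT n) : Prop :=
  ∀ x y : Fin n, ρ x = some y → y ≤ x

/-- Member of the monoid `DORPₙ`: monotone and order-decreasing. -/
def IsDORP {n : ℕ} (ρ : PT n) : Prop :=
  IsDecreasing ρ ∧ (IsIsotone ρ ∨ IsAntitone ρ)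

/-- The image of a partial transformation. -/
def im {n : ℕ} (ρ : PT n) : Set (Fin n) := {y | ∃ x, ρ x = some y}

/-- The domain of a partial transformation. -/
def domSet {n : ℕ} (ρ : PT n) : Set (Fin n) := {x | ρ x ≠ none}

/-- The height of a partial transformation: the size of its image. -/
noncomputable def height {n : ℕ} (ρ : PT n) : ℕ := (im ρ).ncard

/-- Equality of kernels: same domain and the same partition into fibers. -/
def kerEq {n : ℕ} (ρ σ : PT n) : Prop :=
  (∀ x, ρ x = none ↔ σ x = none) ∧ (∀ x y, ρ x = ρ y ↔ σ x = σ y)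

/-- The relation `L*` on `DORPₙ` (note `idPT n ∈ DORPₙ`, so quantifying over `DORPₙ`
is the same as over `DORPₙ¹`). -/
def LStar {n : ℕ} (ρ σ : PT n) : Prop :=
  ∀ τ₁ τ₂ : PT n, IsDORP τ₁ → IsDORP τ₂ →
    (comp ρ τ₁ = comp ρ τ₂ ↔ comp σ τ₁ = comp σ τ₂)

/-- The relation `R*` on `DORPₙ`. -/
def RStar {n : ℕ} (ρ σ : PT n) : Prop :=
  ∀ τ₁ τ₂ : PT n, IsDORP τ₁ → IsDORP τ₂ →
    (comp τ₁ ρ = comp τ₂ ρ ↔ comp τ₁ σ = comp τ₂ σ)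

section StmtAux

variable {n : ℕ}

@[simp] lemma PT_bind_some (a : Fin n) (f : PT n) : (some a).bind f = f a := rfl

@[simp] lemma PT_bind_none (f : PT n) : (none : Option (Fin n)).bind f = none := rfl

lemma comp_eq_iff_agree (ρ τ₁ τ₂ : PT n) :
    comp ρ τ₁ = comp ρ τ₂ ↔ ∀ y ∈ im ρ, τ₁ y = τ₂ y := by
  constructor
  · rintro h y ⟨x, hx⟩
    have := congrFun h x
    simpa [comp, hx] using this
  · intro h
    funext x
    cases hx : ρ x with
    | none => simp [comp, hx]
    | some y => simpa [comp, hx] using h y ⟨x, hx⟩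

lemma nonePT_dorp : IsDORP (fun _ => none : PT n) :=
  ⟨fun a b hb => by simp at hb, Or.inl fun a a' b b' hb => by simp at hb⟩

lemma lstar_im_subset (ρ σ : PT n) (h : LStar ρ σ) : im ρ ⊆ im σ := by
  classical
  rintro y ⟨x, hx⟩
  set τ₁ : PT n := fun z => if z = y then some y else none with hτ₁
  have d1 : IsDORP τ₁ := by
    refine ⟨?_, Or.inl ?_⟩
    · intro a b hb
      by_cases hay : a = y <;> simp [τ₁, hay] at hb
      subst hay; exact hb ▸ le_refl _
    · intro a a' b b' ha ha' _
      by_cases h1 : a = y <;> simp [τ₁, h1] at ha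
      by_cases h2 : a' = y <;> simp [τ₁, h2] at ha'
      subst ha; subst ha'; exact le_refl _
  have hne : comp ρ τ₁ ≠ comp ρ (fun _ => none) := by
    intro he
    have := congrFun he x
    simp [comp, hx, τ₁] at this
  have hne2 : comp σ τ₁ ≠ comp σ (fun _ => none) :=
    fun he => hne ((h τ₁ _ d1 nonePT_dorp).mpr he)
  have : ∃ x', comp σ τ₁ x' ≠ comp σ (fun _ => none) x' := by
    by_contra hc
    push_neg at hc
    exact hne2 (funext hc)
  obtain ⟨x', hx'⟩ := this
  cases hs : σ x' with
  | none => simp [comp, hs] at hx'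
  | some z =>
    by_cases hzy : z = y
    · exact ⟨x', hzy ▸ hs⟩
    · simp [comp, hs, τ₁, hzy] at hx'

lemma lstar_symm (ρ σ : PT n) (h : LStar ρ σ) : LStar σ ρ :=
  fun τ₁ τ₂ d1 d2 => (h τ₁ τ₂ d1 d2).symm

lemma rstar_symm (ρ σ : PT n) (h : RStar ρ σ) : RStar σ ρ :=
  fun τ₁ τ₂ d1 d2 => (h τ₁ τ₂ d1 d2).symm

lemma kerEq_bind (ρ σ : PT n) (hk : kerEq ρ σ) (a b : Option (Fin n)) :
    a.bind ρ = b.bind ρ ↔ a.bind σ = b.bind σ := by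
  cases a with
  | none =>
    cases b with
    | none => simp
    | some b =>
      simp only [PT_bind_none, PT_bind_some]
      constructor
      · intro h; exact ((hk.1 b).mp h.symm).symm
      · intro h; exact ((hk.1 b).mpr h.symm).symm
  | some a =>
    cases b with
    | none =>
      simp only [PT_bind_none, PT_bind_some]
      exact hk.1 a
    | some b =>
      simp only [PT_bind_some]
      exact hk.2 a b

lemma rstar_none (ρ σ : PT n) (h : RStar ρ σ) (a : Fin n) (ha : ρ a = none) :
    σ a = none := by
  classical
  set τ₁ : PT n := fun z => if z = a then some a else none with hτ₁
  have d1 : IsDORP τ₁ := by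
    refine ⟨?_, Or.inl ?_⟩
    · intro x y hy
      by_cases hxa : x = a <;> simp [τ₁, hxa] at hy
      subst hxa; exact hy ▸ le_refl _
    · intro x x' y y' hx hx' _
      by_cases h1 : x = a <;> simp [τ₁, h1] at hx
      by_cases h2 : x' = a <;> simp [τ₁, h2] at hx'
      subst hx; subst hx'; exact le_refl _
  have he : comp τ₁ ρ = comp (fun _ => none) ρ := by
    funext z
    by_cases hz : z = a <;> simp [comp, τ₁, hz, ha]
  have := congrFun ((h τ₁ _ d1 nonePT_dorp).mp he) a
  simpa [comp, τ₁] using this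

lemma rstar_ker (ρ σ : PT n) (h : RStar ρ σ) (a b : Fin n) (hab : ρ a = ρ b) :
    σ a = σ b := by
  classical
  cases hpa : ρ a with
  | none =>
    have hpb : ρ b = none := hab ▸ hpa
    rw [rstar_none ρ σ h a hpa, rstar_none ρ σ h b hpb]
  | some c =>
    set m : Fin n := min a b with hm
    have hmab : m = a ∨ m = b := min_cases a b |>.imp (fun h => h.1) (fun h => h.1)
    have hρm : ρ m = ρ a := by
      rcases hmab with h' | h'
      · rw [h']
      · rw [h', hab]
    set τ₁ : PT n := fun z => if z = a ∨ z = b then some z else none with hτ₁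
    set τ₂ : PT n := fun z => if z = a ∨ z = b then some m else none with hτ₂
    have d1 : IsDORP τ₁ := by
      refine ⟨?_, Or.inl ?_⟩
      · intro x y hy
        by_cases hx : x = a ∨ x = b <;> simp [τ₁, hx] at hy
        exact hy ▸ le_refl _
      · intro x x' y y' hx hx' hle
        by_cases h1 : x = a ∨ x = b <;> simp [τ₁, h1] at hx
        by_cases h2 : x' = a ∨ x' = b <;> simp [τ₁, h2] at hx'
        subst hx; subst hx'; exact hle
    have d2 : IsDORP τ₂ := by
      refine ⟨?_, Or.inl ?_⟩
      · intro x y hy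
        by_cases hx : x = a ∨ x = b <;> simp [τ₂, hx] at hy
        rw [← hy]
        rcases hx with h' | h'
        · rw [h']; exact min_le_left a b
        · rw [h']; exact min_le_right a b
      · intro x x' y y' hx hx' _
        by_cases h1 : x = a ∨ x = b <;> simp [τ₂, h1] at hx
        by_cases h2 : x' = a ∨ x' = b <;> simp [τ₂, h2] at hx'
        subst hx; subst hx'; exact le_refl _
    have he : comp τ₁ ρ = comp τ₂ ρ := by
      funext z
      by_cases hz : z = a ∨ z = b
      · rcases hz with h' | h' <;> subst h' <;>
          simp [comp, τ₁, τ₂, hρm] <;> rw [hab]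
      · simp [comp, τ₁, τ₂, hz]
    have hes := (h τ₁ τ₂ d1 d2).mp he
    have h1 := congrFun hes a
    have h2 := congrFun hes b
    simp [comp, τ₁, τ₂] at h1 h2
    rw [h1, h2]

end StmtAux

theorem stmt12' (n : ℕ) (ρ σ : PT n) (hρ : IsDORP ρ) (hσ : IsDORP σ) :
    (LStar ρ σ ↔ im ρ = im σ) ∧ (RStar ρ σ ↔ kerEq ρ σ) := by
  constructor
  · constructor
    · intro h
      exact Set.Subset.antisymm (lstar_im_subset ρ σ h)
        (lstar_im_subset σ ρ (lstar_symm ρ σ h))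
    · intro him τ₁ τ₂ _ _
      rw [comp_eq_iff_agree, comp_eq_iff_agree, him]
  · constructor
    · intro h
      refine ⟨fun x => ⟨rstar_none ρ σ h x, rstar_none σ ρ (rstar_symm ρ σ h) x⟩,
        fun x y => ⟨rstar_ker ρ σ h x y, rstar_ker σ ρ (rstar_symm ρ σ h) x y⟩⟩
    · intro hk τ₁ τ₂ _ _
      constructor
      · intro h
        funext x
        exact (kerEq_bind ρ σ hk (τ₁ x) (τ₂ x)).mp (congrFun h x)
      · intro h
        funext x
        exact (kerEq_bind ρ σ hk (τ₁ x) (τ₂ x)).mpr (congrFun h x)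
/-- In `DORPₙ`: `ρ L* σ` iff `im ρ = im σ`, and `ρ R* σ` iff `ker ρ = ker σ`. -/
theorem stmt12 (n : ℕ) (ρ σ : PT n) (hρ : IsDORP ρ) (hσ : IsDORP σ) :
    (LStar ρ σ ↔ im ρ = im σ) ∧ (RStar ρ σ ↔ kerEq ρ σ) := by
  exact stmt12' n ρ σ hρ hσ
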